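/- arXiv:0806.3063 — 2 statements merged into one kernel-verified Lean document; each statement's English description precedes it below -/
import Mathlib

section
/- Let 𝔨 be the Lie algebra of a compact Lie group with an Ad-invariant inner product, 𝔨_ℂ its complexification, and {X_k} an orthonormal basis of 𝔨. In the universal enveloping algebra of 𝔨_ℂ (with J denoting multiplication by i on 𝔨_ℂ, viewing X_k and JX_k as elements), the element Σ_k ((JX_k)² − X_k²) commutes with every X_j and every JX_j. -/
/-- The Casimir-type element `∑ k ((J X_k)² − X_k²)` of the universal enveloping
algebra (over `ℝ`) of the complexification `L = 𝔨_ℂ`, where `J` is multiplication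
by `i` and `X` is an orthonormal basis of the compact real form `𝔨`. -/
noncomputable def casimirElement {L : Type*} [LieRing L] [LieAlgebra ℝ L]
    (J : L →ₗ[ℝ] L) {n : ℕ} (X : Fin n → L) : UniversalEnvelopingAlgebra ℝ L :=
  ∑ k : Fin n,
    ((UniversalEnvelopingAlgebra.ι ℝ (J (X k)) : UniversalEnvelopingAlgebra ℝ L) ^ 2
      - (UniversalEnvelopingAlgebra.ι ℝ (X k) : UniversalEnvelopingAlgebra ℝ L) ^ 2)

private lemma antisym_sum {M : Type*} [AddCommGroup M] [Module ℝ M] {n : ℕ}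
    (a : Fin n → Fin n → ℝ) (s : Fin n → Fin n → M)
    (ha : ∀ k l, a k l = - a l k) (hs : ∀ k l, s k l = s l k) :
    ∑ k : Fin n, ∑ l : Fin n, a k l • s k l = 0 := by
  set S := ∑ k : Fin n, ∑ l : Fin n, a k l • s k l with hS
  have h : S = -S := by
    calc S = ∑ l : Fin n, ∑ k : Fin n, a k l • s k l := Finset.sum_comm
    _ = ∑ l : Fin n, ∑ k : Fin n, -(a l k • s l k) := by
        apply Finset.sum_congr rfl; intro l _; apply Finset.sum_congr rfl; intro k _
        rw [hs k l, show a k l = -(a l k) from ha k l, neg_smul]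
    _ = -∑ l : Fin n, ∑ k : Fin n, a l k • s l k := by simp
    _ = -S := rfl
  have h2 : (2:ℝ) • S = 0 := by rw [two_smul]; nth_rewrite 1 [h]; abel
  rcases smul_eq_zero.mp h2 with h3 | h3
  · norm_num at h3
  · exact h3

attribute [local instance 100] LieRing.ofAssociativeRing

/-- Let `L = 𝔨_ℂ` be the complexification of the Lie algebra `𝔨` of a compact group,
regarded as a real Lie algebra, with complex structure `J` (multiplication by `i`),
and let `X₁, …, Xₙ` be an orthonormal basis of `𝔨` for an Ad-invariant inner product,
so that the structure constants `c j k l` (defined by `⁅X j, X k⁆ = ∑ l, c j k l • X l`)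
are antisymmetric in each pair of indices.  Then, in the universal enveloping algebra
of `L` over `ℝ`, the element `∑ k ((J X_k)² − X_k²)` commutes with every `X j` and
with every `J (X j)`. -/
theorem casimir_commutes
    {L : Type*} [LieRing L] [LieAlgebra ℝ L]
    (J : L →ₗ[ℝ] L) (hJ2 : ∀ x, J (J x) = -x)
    (hJb : ∀ x y : L, ⁅J x, y⁆ = J ⁅x, y⁆)
    {n : ℕ} (X : Fin n → L) (c : Fin n → Fin n → Fin n → ℝ)
    (hbrac : ∀ j k, ⁅X j, X k⁆ = ∑ l, c j k l • X l)
    (hanti₁ : ∀ j k l, c j k l = - c k j l)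
    (hanti₂ : ∀ j k l, c j k l = - c j l k)
    (j : Fin n) :
    Commute (casimirElement J X)
      (UniversalEnvelopingAlgebra.ι ℝ (X j) : UniversalEnvelopingAlgebra ℝ L)
    ∧
    Commute (casimirElement J X)
      (UniversalEnvelopingAlgebra.ι ℝ (J (X j)) : UniversalEnvelopingAlgebra ℝ L) := by
  set A : Fin n → UniversalEnvelopingAlgebra ℝ L :=
    fun k => UniversalEnvelopingAlgebra.ι ℝ (J (X k)) with hA
  set B : Fin n → UniversalEnvelopingAlgebra ℝ L :=
    fun k => UniversalEnvelopingAlgebra.ι ℝ (X k) with hB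
  have hcomm : ∀ x y : L,
      (UniversalEnvelopingAlgebra.ι ℝ x : UniversalEnvelopingAlgebra ℝ L) *
        UniversalEnvelopingAlgebra.ι ℝ y -
      UniversalEnvelopingAlgebra.ι ℝ y * UniversalEnvelopingAlgebra.ι ℝ x =
      UniversalEnvelopingAlgebra.ι ℝ ⁅x, y⁆ := by
    intro x y
    rw [LieHom.map_lie, Ring.lie_def]
  -- bracket of X k with X j
  have hXX : ∀ k, ⁅X k, X j⁆ = ∑ l, c k j l • X l := fun k => hbrac k j
  have hJXX : ∀ k, ⁅J (X k), X j⁆ = ∑ l, c k j l • J (X l) := by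
    intro k; rw [hJb, hXX]; simp
  have hXJX : ∀ k, ⁅X k, J (X j)⁆ = ∑ l, c k j l • J (X l) := by
    intro k
    rw [← neg_neg (⁅X k, J (X j)⁆), ← lie_skew, hJb, ← lie_skew, map_neg, neg_neg, hXX]
    simp
  have hJXJX : ∀ k, ⁅J (X k), J (X j)⁆ = -∑ l, c k j l • X l := by
    intro k
    rw [hJb, hXJX]
    simp [hJ2]
  have hBB : ∀ k, B k * B j - B j * B k = ∑ l, c k j l • B l := by
    intro k; rw [hB]; simp only []; rw [hcomm, hXX]; simp
  have hAB : ∀ k, A k * B j - B j * A k = ∑ l, c k j l • A l := by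
    intro k; rw [hA, hB]; simp only []; rw [hcomm, hJXX]; simp
  have hBA : ∀ k, B k * A j - A j * B k = ∑ l, c k j l • A l := by
    intro k; rw [hA, hB]; simp only []; rw [hcomm, hXJX]; simp
  have hAA : ∀ k, A k * A j - A j * A k = -∑ l, c k j l • B l := by
    intro k; rw [hA, hB]; simp only []; rw [hcomm, hJXJX]; simp
  have hC : casimirElement J X = ∑ k : Fin n, (A k ^ 2 - B k ^ 2) := rfl
  have ha : ∀ k l, c k j l = - c l j k := by
    intro k l
    have h1 := hanti₁ k j l
    have h2 := hanti₂ j k l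
    have h3 := hanti₁ j l k
    linarith
  have key : ∀ (v : UniversalEnvelopingAlgebra ℝ L)
      (s : Fin n → Fin n → UniversalEnvelopingAlgebra ℝ L),
      (∀ k, (A k ^ 2 - B k ^ 2) * v - v * (A k ^ 2 - B k ^ 2) = ∑ l, c k j l • s k l) →
      (∀ k l, s k l = s l k) →
      Commute (casimirElement J X) v := by
    intro v s hsum hsym
    rw [Commute, SemiconjBy, ← sub_eq_zero, hC, Finset.sum_mul, Finset.mul_sum,
      ← Finset.sum_sub_distrib]
    rw [Finset.sum_congr rfl (fun k _ => hsum k)]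
    exact antisym_sum (fun k l => c k j l) s ha hsym
  constructor
  · apply key (B j) (fun k l => A k * A l + A l * A k - (B k * B l + B l * B k))
    · intro k
      have e1 : (A k ^ 2 - B k ^ 2) * B j - B j * (A k ^ 2 - B k ^ 2)
          = A k * (A k * B j - B j * A k) + (A k * B j - B j * A k) * A k
            - (B k * (B k * B j - B j * B k) + (B k * B j - B j * B k) * B k) := by
        noncomm_ring
      rw [e1, hAB k, hBB k]
      simp only [Finset.mul_sum, Finset.sum_mul, mul_smul_comm, smul_mul_assoc,
        smul_add, smul_sub, Finset.sum_add_distrib, Finset.sum_sub_distrib]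
    · intro k l; abel
  · apply key (A j) (fun k l => -(A k * B l) - B l * A k - (B k * A l) - A l * B k)
    · intro k
      have e1 : (A k ^ 2 - B k ^ 2) * A j - A j * (A k ^ 2 - B k ^ 2)
          = A k * (A k * A j - A j * A k) + (A k * A j - A j * A k) * A k
            - (B k * (B k * A j - A j * B k) + (B k * A j - A j * B k) * B k) := by
        noncomm_ring
      rw [e1, hAA k, hBA k]
      simp only [Finset.mul_sum, Finset.sum_mul, mul_smul_comm, smul_mul_assoc,
        smul_add, smul_sub, smul_neg, Finset.sum_add_distrib, Finset.sum_sub_distrib,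
        mul_neg, neg_mul, Finset.sum_neg_distrib]
      abel
    · intro k l; abel
end

section
/- Let θ_ℂ denote the solution map of the (deterministic analogue of the) differential equation dg_t = g_t (dA_t + i dB_t) on K_ℂ, and θ the solution of dx_t = x_t dA_t on K, for smooth paths A, B in 𝔨 with A_0 = B_0 = 0. Define B^{θ(A)}_t = ∫_0^t Ad_{θ(A)_s}(dB_s). Then θ_ℂ(A + iB)_t = θ_ℂ(i B^{θ(A)})_t · θ(A)_t for all t. -/
/-- The decomposition `θ_ℂ(A + iB) = θ_ℂ(i B^{θ(A)}) · θ(A)` for the solution maps of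
the left logarithmic-derivative equations on (a Banach-algebra model of) `K_ℂ`.
Here `x = θ(A)` solves `x' = x A'`, `x(0) = 1`, with pointwise inverse `xi`;
`g = θ_ℂ(A + iB)` solves `g' = g (A' + i B')`, `g(0) = 1`; and
`h = θ_ℂ(i B^{θ(A)})` solves `h' = h · i Ad_{x}(B') = h · i (x B' x⁻¹)`, `h(0) = 1`.
Then `g t = h t * x t` for all `t`. -/
theorem theta_complex_decomposition
    {𝒜 : Type*} [NormedRing 𝒜] [NormedAlgebra ℂ 𝒜] [CompleteSpace 𝒜]
    (A' B' : ℝ → 𝒜) (hA' : Continuous A') (hB' : Continuous B')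
    (x xi g h : ℝ → 𝒜)
    (hx0 : x 0 = 1) (hxinv : ∀ t, x t * xi t = 1 ∧ xi t * x t = 1)
    (hx : ∀ t, HasDerivAt x (x t * A' t) t)
    (hg0 : g 0 = 1)
    (hg : ∀ t, HasDerivAt g (g t * (A' t + Complex.I • B' t)) t)
    (hh0 : h 0 = 1)
    (hh : ∀ t, HasDerivAt h (h t * (Complex.I • (x t * B' t * xi t))) t)
    (t : ℝ) :
    g t = h t * x t := by
  -- the coefficient of the common linear ODE
  set c : ℝ → 𝒜 := fun s => A' s + Complex.I • B' s with hc_def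
  have hc : Continuous c := hA'.add (hB'.const_smul Complex.I)
  -- `u = h * x` solves the same ODE as `g`
  set u : ℝ → 𝒜 := fun s => h s * x s with hu_def
  have hu : ∀ s, HasDerivAt u (u s * c s) s := by
    intro s
    have hix : xi s * x s = 1 := (hxinv s).2
    have H := (hh s).mul (hx s)
    convert H using 1
    · rfl
    simp only [hu_def, hc_def, mul_add]
    rw [add_comm]
    congr 1
    · simp only [mul_smul_comm, smul_mul_assoc, mul_assoc, hix, mul_one]
    · rw [mul_assoc]
  -- interval containing both 0 and t in its interior
  set a : ℝ := min 0 t - 1 with ha_def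
  set b : ℝ := max 0 t + 1 with hb_def
  have hab : a < b := by
    have h1 : min 0 t ≤ max 0 t := le_trans (min_le_left 0 t) (le_max_left 0 t)
    simp only [ha_def, hb_def]; linarith
  have h0mem : (0 : ℝ) ∈ Set.Ioo a b := by
    constructor
    · simp only [ha_def]; have := min_le_left 0 t; linarith
    · simp only [hb_def]; have := le_max_left 0 t; linarith
  have htmem : t ∈ Set.Icc a b := by
    constructor
    · simp only [ha_def]; have := min_le_right 0 t; linarith
    · simp only [hb_def]; have := le_max_right 0 t; linarith
  -- clamp to get a globally Lipschitz vector field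
  set p : ℝ → ℝ := fun s => max a (min s b) with hp_def
  have hpmem : ∀ s, p s ∈ Set.Icc a b := by
    intro s
    refine ⟨le_max_left _ _, max_le hab.le (min_le_right _ _)⟩
  have hpeq : ∀ s ∈ Set.Ioo a b, p s = s := by
    intro s hs
    simp only [hp_def]
    rw [min_eq_left hs.2.le, max_eq_right hs.1.le]
  -- uniform bound on `c` over the compact interval
  obtain ⟨C, hC⟩ := (isCompact_Icc (a := a) (b := b)).exists_bound_of_continuousOn
    hc.continuousOn
  have hC0 : 0 ≤ C := le_trans (norm_nonneg _) (hC a ⟨le_rfl, hab.le⟩)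
  set K : NNReal := ⟨C, hC0⟩ with hK_def
  set v : ℝ → 𝒜 → 𝒜 := fun s y => y * c (p s) with hv_def
  have hv : ∀ s, LipschitzWith K (v s) := by
    intro s
    apply LipschitzWith.of_dist_le_mul
    intro y y'
    simp only [hv_def, dist_eq_norm]
    rw [← sub_mul]
    calc ‖(y - y') * c (p s)‖ ≤ ‖y - y'‖ * ‖c (p s)‖ := norm_mul_le _ _
      _ ≤ ‖y - y'‖ * C := by
          have := hC (p s) (hpmem s)
          exact mul_le_mul_of_nonneg_left this (norm_nonneg _)
      _ = (K : ℝ) * ‖y - y'‖ := by rw [mul_comm]; rfl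
  -- apply uniqueness of ODE solutions on `Icc a b`
  have key : Set.EqOn g u (Set.Icc a b) := by
    apply ODE_solution_unique_of_mem_Icc (s := fun _ => Set.univ)
      (fun s _ => (hv s).lipschitzOnWith) h0mem
    · exact fun s _ => (hg s).continuousAt.continuousWithinAt
    · intro s hs
      rw [hv_def]; simp only []
      rw [hpeq s hs]
      exact hg s
    · exact fun _ _ => Set.mem_univ _
    · exact fun s _ => (hu s).continuousAt.continuousWithinAt
    · intro s hs
      rw [hv_def]; simp only []
      rw [hpeq s hs]
      exact hu s
    · exact fun _ _ => Set.mem_univ _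
    · simp only [hu_def, hg0, hh0, hx0, mul_one]
  exact key htmem
end
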